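/- Let C be a symmetric convex body in a real Hilbert space H. For every δ > 0 there exists a complete orthonormal system 𝐞 in H such that, for every integer k ≥ 2, one has R_k(𝐞, C) ⊆ (3 + δ)·R_{k-1}(𝐞, C). -/

import Mathlib

open Set Pointwise
open scoped RealInnerProductSpace

/-- `E ⊆ H` is a complete orthonormal system: its elements are pairwise orthogonal unit
vectors and its span is dense in `H`. -/
def IsCompleteONS {H : Type*} [NormedAddCommGroup H] [InnerProductSpace ℝ H]
    (E : Set H) : Prop :=
  Orthonormal ℝ ((↑) : E → H) ∧ (Submodule.span ℝ E).topologicalClosure = ⊤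

/-- The `k`-cross approximation of `C ⊆ H` with respect to the orthonormal system `E`:
the closed convex hull of `C ∩ ⋃_{S ∈ [E]_k} F(S)`. -/
noncomputable def kCrossH {H : Type*} [NormedAddCommGroup H] [InnerProductSpace ℝ H]
    (E : Set H) (k : ℕ) (C : Set H) : Set H :=
  closure (convexHull ℝ (C ∩ ⋃ S ∈ {S : Set H | S ⊆ E ∧ S.Finite ∧ S.ncard = k},
    ((Submodule.span ℝ S).topologicalClosure : Set H)))

noncomputable section CrossAux

open scoped RealInnerProductSpace

universe u

variable {H : Type u} [NormedAddCommGroup H] [InnerProductSpace ℝ H]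

/-- `c` is a valid "greedy" choice given the previously chosen vectors `prev`. -/
def GoodVec (C : Set H) (ε : ℝ) (prev : Set H) (c : H) : Prop :=
  c ∈ C ∧ c ≠ 0 ∧ (∀ p ∈ prev, ⟪p, c⟫ = 0) ∧
    ∀ x ∈ C, (∀ p ∈ prev, ⟪p, x⟫ = 0) → ‖x‖ ≤ (1 + ε) * ‖c‖

/-- Choose the next unit vector of the greedy basis. -/
def pickVec (C : Set H) (ε : ℝ) (prev : Set H) : H :=
  @dite H (∃ c, GoodVec C ε prev c) (Classical.propDecidable _)
    (fun h => ‖h.choose‖⁻¹ • h.choose) (fun _ => (0 : H))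

/-- The transfinite greedy sequence. -/
def gseq (C : Set H) (ε : ℝ) : Ordinal.{u} → H :=
  Ordinal.lt_wf.fix fun α ih => pickVec C ε {v | ∃ β, ∃ h : β < α, ih β h = v}

set_option linter.unusedSectionVars false in
theorem gseq_def (C : Set H) (ε : ℝ) (α : Ordinal.{u}) :
    gseq C ε α = pickVec C ε {v | ∃ β, ∃ _ : β < α, gseq C ε β = v} := by
  conv_lhs => rw [gseq, WellFounded.fix_eq]
  rfl

theorem gseq_spec {C : Set H} {ε : ℝ} {α : Ordinal.{u}} (h : gseq C ε α ≠ 0) :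
    ∃ c : H, GoodVec C ε {v | ∃ β, ∃ _ : β < α, gseq C ε β = v} c ∧
      gseq C ε α = ‖c‖⁻¹ • c := by
  rw [gseq_def] at h ⊢
  unfold pickVec at h ⊢
  by_cases hex : ∃ c, GoodVec C ε {v | ∃ β, ∃ _ : β < α, gseq C ε β = v} c
  · rw [dif_pos hex] at h ⊢
    exact ⟨hex.choose, hex.choose_spec, rfl⟩
  · rw [dif_neg hex] at h
    exact absurd rfl h

theorem gseq_norm {C : Set H} {ε : ℝ} {α : Ordinal.{u}} (h : gseq C ε α ≠ 0) :
    ‖gseq C ε α‖ = 1 := by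
  obtain ⟨c, hc, hrepr⟩ := gseq_spec h
  rw [hrepr]
  exact norm_smul_inv_norm (𝕜 := ℝ) hc.2.1

theorem gseq_orth {C : Set H} {ε : ℝ} {α β : Ordinal.{u}} (hβα : β < α)
    (h : gseq C ε α ≠ 0) : ⟪gseq C ε β, gseq C ε α⟫ = 0 := by
  obtain ⟨c, hc, hrepr⟩ := gseq_spec h
  have h0 : ⟪gseq C ε β, c⟫ = 0 := hc.2.2.1 _ ⟨β, hβα, rfl⟩
  rw [hrepr, real_inner_smul_right, h0, mul_zero]

theorem gseq_exists_zero (C : Set H) (ε : ℝ) : ∃ α : Ordinal.{u}, gseq C ε α = 0 := by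
  by_contra h
  push_neg at h
  have hinj : Function.Injective (gseq C ε) := by
    intro β α heq
    by_contra hne
    rcases lt_or_gt_of_ne hne with hlt | hlt
    · have h0 := gseq_orth (C := C) (ε := ε) hlt (h α)
      rw [heq] at h0
      exact h α (inner_self_eq_zero.mp h0)
    · have h0 := gseq_orth (C := C) (ε := ε) hlt (h β)
      rw [heq] at h0
      exact h α (inner_self_eq_zero.mp h0)
  exact not_small_ordinal.{u, u} (small_of_injective hinj)

/-- Existence of a greedy choice whenever the orthocomplement is nontrivial. -/
theorem exists_goodVec {C : Set H} {ε r : ℝ} (hball : Metric.ball (0 : H) r ⊆ C)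
    (hr : 0 < r) (hbdd : Bornology.IsBounded C) (hε : 0 < ε) (prev : Set H) {v : H}
    (hv0 : v ≠ 0) (hvorth : ∀ p ∈ prev, ⟪p, v⟫ = 0) : ∃ c, GoodVec C ε prev c := by
  set T : Set H := {x | x ∈ C ∧ ∀ p ∈ prev, ⟪p, x⟫ = 0} with hT
  obtain ⟨R, hR⟩ := hbdd.subset_closedBall 0
  have hbdda : BddAbove (norm '' T) := by
    refine ⟨R, fun y hy => ?_⟩
    obtain ⟨x, hx, rfl⟩ := hy
    simpa using mem_closedBall_zero_iff.mp (hR hx.1)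
  set v' : H := (r / 2) • ‖v‖⁻¹ • v with hv'
  have hv'norm : ‖v'‖ = r / 2 := by
    have h1 : ‖(‖v‖⁻¹ : ℝ) • v‖ = 1 := norm_smul_inv_norm (𝕜 := ℝ) hv0
    rw [hv', norm_smul, h1, mul_one, Real.norm_eq_abs, abs_of_pos (by linarith)]
  have hv'T : v' ∈ T := by
    constructor
    · exact hball (by rw [Metric.mem_ball, dist_zero_right, hv'norm]; linarith)
    · intro p hp
      rw [hv', real_inner_smul_right, real_inner_smul_right, hvorth p hp]
      ring
  set ρ : ℝ := sSup (norm '' T) with hρdef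
  have hρ : r / 2 ≤ ρ := by
    have := le_csSup hbdda ⟨v', hv'T, rfl⟩
    rwa [hv'norm] at this
  have hρpos : 0 < ρ := lt_of_lt_of_le (by linarith) hρ
  have hlt : ρ / (1 + ε) < ρ := div_lt_self hρpos (by linarith)
  obtain ⟨y, hy, hby⟩ := exists_lt_of_lt_csSup (⟨‖v'‖, v', hv'T, rfl⟩ : (norm '' T).Nonempty) hlt
  obtain ⟨c, hcT, rfl⟩ := hy
  have hcne : c ≠ 0 := by
    refine norm_pos_iff.mp (lt_trans ?_ hby)
    positivity
  refine ⟨c, hcT.1, hcne, hcT.2, fun x hx hxorth => ?_⟩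
  have hxρ : ‖x‖ ≤ ρ := le_csSup hbdda ⟨x, ⟨hx, hxorth⟩, rfl⟩
  have h2 : ρ < (1 + ε) * ‖c‖ := by
    rw [div_lt_iff₀ (by linarith : (0:ℝ) < 1 + ε)] at hby
    linarith
  linarith

/-- Points of the segment `[-c, c]` belong to a symmetric convex set containing `c`. -/
theorem segment_mem {C : Set H} (hconv : Convex ℝ C) (hsym : C = -C) {c : H} (hc : c ∈ C)
    {a : ℝ} (ha : |a| ≤ 1) : a • c ∈ C := by
  have hnc : -c ∈ C := by
    rw [hsym]
    exact Set.neg_mem_neg.mpr hc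
  obtain ⟨ha1, ha2⟩ := abs_le.mp ha
  have h := hconv hc hnc (by linarith : (0:ℝ) ≤ (1 + a) / 2)
    (by linarith : (0:ℝ) ≤ (1 - a) / 2) (by ring)
  have heq : ((1 + a) / 2) • c + ((1 - a) / 2) • (-c) = a • c := by
    rw [smul_neg, ← sub_eq_add_neg, ← sub_smul]
    congr 1
    ring
  rwa [heq] at h

/-- Coefficient extraction from the span of a finite orthonormal set. -/
theorem sub_coeff_mem_span {S : Set H}
    (horth : ∀ v ∈ S, ∀ w ∈ S, v ≠ w → ⟪v, w⟫ = 0)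
    (hnorm : ∀ v ∈ S, ‖v‖ = 1) {e : H} (he : e ∈ S) {x : H}
    (hx : x ∈ Submodule.span ℝ S) :
    x - ⟪e, x⟫ • e ∈ Submodule.span ℝ (S \ {e}) := by
  have hsplit : Submodule.span ℝ S
      = Submodule.span ℝ (S \ {e}) ⊔ Submodule.span ℝ {e} := by
    rw [← Submodule.span_union, Set.diff_union_of_subset (Set.singleton_subset_iff.mpr he)]
  rw [hsplit] at hx
  obtain ⟨w, hw, z, hz, rfl⟩ := Submodule.mem_sup.mp hx
  have hz' : z ∈ (ℝ ∙ e : Submodule ℝ H) := hz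
  obtain ⟨t, rfl⟩ := Submodule.mem_span_singleton.mp hz'
  have hle : Submodule.span ℝ (S \ {e}) ≤ (ℝ ∙ e)ᗮ := by
    rw [Submodule.span_le]
    intro v hv
    refine SetLike.mem_coe.mpr (Submodule.mem_orthogonal_singleton_iff_inner_left.mpr ?_)
    exact horth v hv.1 e he (by simpa using hv.2)
  have hw0 : ⟪e, w⟫ = 0 :=
    Submodule.mem_orthogonal_singleton_iff_inner_right.mp (hle hw)
  have hti : ⟪e, w + t • e⟫ = t := by
    rw [inner_add_right, hw0, real_inner_smul_right, real_inner_self_eq_norm_mul_norm,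
      hnorm e he]
    ring
  rw [hti, add_sub_cancel_right]
  exact hw

end CrossAux

/-- For every symmetric convex body `C` in a Hilbert space and every `δ > 0` there is a
complete orthonormal system `E` such that `R_k(E, C) ⊆ (3 + δ) • R_{k-1}(E, C)` for every
integer `k ≥ 2`. -/
theorem stmt_11 {H : Type*} [NormedAddCommGroup H] [InnerProductSpace ℝ H] [CompleteSpace H]
    (C : Set H) (hCcl : IsClosed C) (hCconv : Convex ℝ C)
    (hCbdd : Bornology.IsBounded C) (hCint : (interior C).Nonempty) (hCsym : C = -C)
    (δ : ℝ) (hδ : 0 < δ) :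
    ∃ E : Set H, IsCompleteONS E ∧
      ∀ k : ℕ, 2 ≤ k → kCrossH E k C ⊆ (3 + δ) • kCrossH E (k - 1) C := by
  classical
  -- a small ball around the origin inside `C`
  obtain ⟨p, hp⟩ := hCint
  obtain ⟨r, hr, hball_p⟩ := Metric.mem_nhds_iff.mp (mem_interior_iff_mem_nhds.mp hp)
  have hball : Metric.ball (0 : H) r ⊆ C := by
    intro w hw
    have hw' : ‖w‖ < r := mem_ball_zero_iff.mp hw
    have h1 : p + w ∈ C := hball_p (by
      rw [Metric.mem_ball, dist_eq_norm, add_sub_cancel_left]; exact hw')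
    have h2 : p - w ∈ C := hball_p (by
      rw [Metric.mem_ball, dist_eq_norm]
      have hpw : p - w - p = -w := by abel
      rw [hpw, norm_neg]; exact hw')
    have h3 : -(p - w) ∈ C := by
      rw [hCsym]; exact Set.neg_mem_neg.mpr h2
    have h4 := hCconv h1 h3 (by norm_num : (0:ℝ) ≤ 1/2) (by norm_num : (0:ℝ) ≤ 1/2)
      (by norm_num)
    have h5 : (1/2 : ℝ) • (p + w) + (1/2 : ℝ) • (-(p - w)) = w := by module
    rwa [h5] at h4
  set ε : ℝ := δ / 2 with hεdef
  have hεpos : 0 < ε := by positivity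
  -- the length of the greedy sequence
  have hZne : {α : Ordinal | gseq C ε α = 0}.Nonempty := gseq_exists_zero C ε
  set Λ : Ordinal := sInf {α : Ordinal | gseq C ε α = 0} with hΛdef
  have hΛ0 : gseq C ε Λ = 0 := csInf_mem hZne
  have hne0 : ∀ β < Λ, gseq C ε β ≠ 0 := by
    intro β hβ h0
    exact absurd (csInf_le (OrderBot.bddBelow _) (show β ∈ {α : Ordinal | gseq C ε α = 0} from h0)) (not_le.mpr hβ)
  set E : Set H := {v : H | ∃ β, ∃ _ : β < Λ, gseq C ε β = v} with hE
  have hEnorm : ∀ v ∈ E, ‖v‖ = 1 := by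
    rintro v ⟨β, hβ, rfl⟩
    exact gseq_norm (hne0 β hβ)
  have hEorth : ∀ v ∈ E, ∀ w ∈ E, v ≠ w → ⟪v, w⟫ = 0 := by
    rintro v ⟨β, hβ, rfl⟩ w ⟨γ, hγ, rfl⟩ hne
    rcases lt_trichotomy β γ with h | h | h
    · exact gseq_orth h (hne0 γ hγ)
    · exact absurd (by rw [h]) hne
    · rw [real_inner_comm]
      exact gseq_orth h (hne0 β hβ)
  refine ⟨E, ⟨?_, ?_⟩, ?_⟩
  · -- orthonormality
    rw [orthonormal_subtype_iff_ite]
    intro v hv w hw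
    by_cases hvw : v = w
    · rw [if_pos hvw, hvw, real_inner_self_eq_norm_mul_norm, hEnorm w hw]
      norm_num
    · rw [if_neg hvw]
      exact hEorth v hv w hw hvw
  · -- density of the span
    rw [Submodule.topologicalClosure_eq_top_iff, Submodule.eq_bot_iff]
    intro v hv
    by_contra hv0
    have hvorth : ∀ q ∈ E, ⟪q, v⟫ = 0 := fun q hq =>
      (Submodule.mem_orthogonal _ v).mp hv q (Submodule.subset_span hq)
    obtain ⟨c, hc⟩ := exists_goodVec hball hr hCbdd hεpos E hv0 hvorth
    have h0 := hΛ0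
    rw [gseq_def] at h0
    unfold pickVec at h0
    rw [← hE] at h0
    rw [dif_pos ⟨c, hc⟩] at h0
    have hch : (⟨c, hc⟩ : ∃ c, GoodVec C ε E c).choose ≠ 0 :=
      (⟨c, hc⟩ : ∃ c, GoodVec C ε E c).choose_spec.2.1
    rcases smul_eq_zero.mp h0 with h' | h'
    · rw [inv_eq_zero, norm_eq_zero] at h'
      exact hch h'
    · exact hch h'
  · -- the main inclusion
    intro k hk
    have h3δ : (0:ℝ) < 3 + δ := by linarith
    have hXclosed : IsClosed ((3 + δ) • kCrossH E (k - 1) C) :=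
      IsClosed.smul_of_ne_zero isClosed_closure (by linarith)
    have hXconv : Convex ℝ ((3 + δ) • kCrossH E (k - 1) C) :=
      ((convex_convexHull ℝ _).closure).smul _
    refine closure_minimal (convexHull_min ?_ hXconv) hXclosed
    rintro x ⟨hxC, hxU⟩
    rw [Set.mem_iUnion₂] at hxU
    obtain ⟨S, ⟨hSE, hSfin, hScard⟩, hxS⟩ := hxU
    haveI := FiniteDimensional.span_of_finite ℝ hSfin
    rw [IsClosed.submodule_topologicalClosure_eq
      (Submodule.closed_of_finiteDimensional _)] at hxS
    have hxS' : x ∈ Submodule.span ℝ S := hxS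
    -- the minimal ordinal index appearing in `S`
    have hIne : {β : Ordinal | β < Λ ∧ gseq C ε β ∈ S}.Nonempty := by
      obtain ⟨v, hv⟩ := Set.nonempty_of_ncard_ne_zero (s := S) (by omega)
      obtain ⟨β, hβ, hveq⟩ := hSE hv
      exact ⟨β, hβ, hveq ▸ hv⟩
    set γ1 : Ordinal := sInf {β : Ordinal | β < Λ ∧ gseq C ε β ∈ S} with hγ1def
    have hγ1I : γ1 < Λ ∧ gseq C ε γ1 ∈ S := csInf_mem hIne
    set e0 : H := gseq C ε γ1 with he0def
    have he0S : e0 ∈ S := hγ1I.2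
    have he0norm : ‖e0‖ = 1 := gseq_norm (hne0 γ1 hγ1I.1)
    -- `x` is orthogonal to all earlier vectors of the greedy sequence
    have hxorth : ∀ β < γ1, ⟪gseq C ε β, x⟫ = 0 := by
      intro β hβ
      have hspan : Submodule.span ℝ S ≤ (ℝ ∙ (gseq C ε β))ᗮ := by
        rw [Submodule.span_le]
        intro v hv
        obtain ⟨γ, hγ, hveq⟩ := hSE hv
        have hγI : γ ∈ {β : Ordinal | β < Λ ∧ gseq C ε β ∈ S} := ⟨hγ, hveq ▸ hv⟩
        have hβγ : β < γ := lt_of_lt_of_le hβ (csInf_le (OrderBot.bddBelow _) hγI)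
        refine SetLike.mem_coe.mpr (Submodule.mem_orthogonal_singleton_iff_inner_right.mpr ?_)
        rw [← hveq]
        exact gseq_orth hβγ (hne0 γ hγ)
      exact Submodule.mem_orthogonal_singleton_iff_inner_right.mp (hspan hxS')
    -- the greedy bound
    obtain ⟨c, hcGood, he0repr⟩ := gseq_spec (hne0 γ1 hγ1I.1)
    have he0c : e0 = ‖c‖⁻¹ • c := he0repr
    have hcC : c ∈ C := hcGood.1
    have hcne : c ≠ 0 := hcGood.2.1
    have hcpos : 0 < ‖c‖ := norm_pos_iff.mpr hcne
    have hxnorm : ‖x‖ ≤ (1 + ε) * ‖c‖ := by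
      refine hcGood.2.2.2 x hxC ?_
      rintro q ⟨β, hβ, rfl⟩
      exact hxorth β hβ
    set t : ℝ := ⟪e0, x⟫ with htdef
    have htle : |t| ≤ (1 + ε) * ‖c‖ := by
      calc |t| ≤ ‖e0‖ * ‖x‖ := abs_real_inner_le_norm e0 x
        _ = ‖x‖ := by rw [he0norm, one_mul]
        _ ≤ (1 + ε) * ‖c‖ := hxnorm
    have h1ε : (0:ℝ) < 1 + ε := by linarith
    have h2ε : (0:ℝ) < 2 + ε := by linarith
    have hcoef : |t * (‖c‖⁻¹ * (1+ε)⁻¹)| ≤ 1 := by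
      rw [abs_mul, abs_mul, abs_inv, abs_inv, abs_norm, abs_of_pos h1ε]
      calc |t| * (‖c‖⁻¹ * (1+ε)⁻¹) ≤ ((1+ε) * ‖c‖) * (‖c‖⁻¹ * (1+ε)⁻¹) :=
            mul_le_mul_of_nonneg_right htle (by positivity)
        _ = 1 := by field_simp
    -- the two pieces of the decomposition
    have hz1C : ((1+ε)⁻¹ * t) • e0 ∈ C := by
      have heq : ((1+ε)⁻¹ * t) • e0 = (t * (‖c‖⁻¹ * (1+ε)⁻¹)) • c := by
        rw [he0c, smul_smul]; ring_nf
      rw [heq]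
      exact segment_mem hCconv hCsym hcC hcoef
    have hz1C' : (-((1+ε)⁻¹ * t)) • e0 ∈ C := by
      have heq : (-((1+ε)⁻¹ * t)) • e0 = (-(t * (‖c‖⁻¹ * (1+ε)⁻¹))) • c := by
        rw [he0c, smul_smul]; ring_nf
      rw [heq]
      exact segment_mem hCconv hCsym hcC (by rwa [abs_neg])
    have hSorth : ∀ v ∈ S, ∀ w ∈ S, v ≠ w → ⟪v, w⟫ = 0 := fun v hv w hw =>
      hEorth v (hSE hv) w (hSE hw)
    have hSnorm : ∀ v ∈ S, ‖v‖ = 1 := fun v hv => hEnorm v (hSE hv)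
    have hyspan : x - t • e0 ∈ Submodule.span ℝ (S \ {e0}) :=
      sub_coeff_mem_span hSorth hSnorm he0S hxS'
    have hy1C : (2+ε)⁻¹ • (x - t • e0) ∈ C := by
      have h4 := hCconv hxC hz1C' (le_of_lt (by positivity : (0:ℝ) < (2+ε)⁻¹))
        (le_of_lt (by positivity : (0:ℝ) < (1+ε) * (2+ε)⁻¹))
        (by field_simp; ring)
      have heq : (2+ε)⁻¹ • x + ((1+ε) * (2+ε)⁻¹) • ((-((1+ε)⁻¹ * t)) • e0)
          = (2+ε)⁻¹ • (x - t • e0) := by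
        match_scalars
        · ring
        · field_simp
      rwa [heq] at h4
    -- memberships in the generating set at level `k - 1`
    obtain ⟨v', hv'S, hv'ne⟩ := Set.exists_ne_of_one_lt_ncard (by omega : 1 < S.ncard) e0
    have hy1G : (2+ε)⁻¹ • (x - t • e0) ∈
        C ∩ ⋃ S' ∈ {S' : Set H | S' ⊆ E ∧ S'.Finite ∧ S'.ncard = k - 1},
          ((Submodule.span ℝ S').topologicalClosure : Set H) := by
      refine ⟨hy1C, Set.mem_iUnion₂.mpr ⟨S \ {e0},
        ⟨Set.diff_subset.trans hSE, hSfin.subset Set.diff_subset, ?_⟩, ?_⟩⟩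
      · rw [Set.ncard_diff_singleton_of_mem he0S, hScard]
      · exact SetLike.mem_coe.mpr ((Submodule.le_topologicalClosure _)
          (Submodule.smul_mem _ _ hyspan))
    have hz1G : ((1+ε)⁻¹ * t) • e0 ∈
        C ∩ ⋃ S' ∈ {S' : Set H | S' ⊆ E ∧ S'.Finite ∧ S'.ncard = k - 1},
          ((Submodule.span ℝ S').topologicalClosure : Set H) := by
      refine ⟨hz1C, Set.mem_iUnion₂.mpr ⟨S \ {v'},
        ⟨Set.diff_subset.trans hSE, hSfin.subset Set.diff_subset, ?_⟩, ?_⟩⟩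
      · rw [Set.ncard_diff_singleton_of_mem hv'S, hScard]
      · refine SetLike.mem_coe.mpr ((Submodule.le_topologicalClosure _)
          (Submodule.smul_mem _ _ (Submodule.subset_span ?_)))
        exact ⟨he0S, fun h => hv'ne (Set.mem_singleton_iff.mp h).symm⟩
    -- assembling the convex combination
    refine Set.mem_smul_set.mpr ⟨((2+ε)/(3+δ)) • ((2+ε)⁻¹ • (x - t • e0))
      + ((1+ε)/(3+δ)) • (((1+ε)⁻¹ * t) • e0), ?_, ?_⟩
    · apply subset_closure
      have hsum : (2+ε)/(3+δ) + (1+ε)/(3+δ) = 1 := by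
        rw [← add_div, show (2+ε)+(1+ε) = 3+δ by rw [hεdef]; ring]
        exact div_self (by linarith)
      exact (convex_convexHull ℝ _) (subset_convexHull ℝ _ hy1G)
        (subset_convexHull ℝ _ hz1G) (by positivity) (by positivity) hsum
    · have h3δne : (3+δ) ≠ 0 := by linarith
      match_scalars
      · field_simp
      · field_simp
        ring
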